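/- Let k be an even integer and s ∈ ℂ with 2·Re(s) + k > 3. Then for every Z ∈ ℍ₂, A_k(Z, s) = Σ_{h ∈ Γ_∞\Γ} j(h_•, Z)^{−k} · (δ(h_•(Z)) / Im((h_•(Z))*))^s · E_k((h_•(Z))*, s), where W* denotes the (1,1) entry of W ∈ ℍ₂ (which lies in the upper half-plane ℍ), and E_k(τ, s) := Σ_{g ∈ Γ_∞\Γ} j(g, τ)^{−k} Im(g(τ))^s is the real-analytic Eisenstein series on ℍ (with j([[a,b],[c,d]], τ) = cτ + d and g(τ) the Möbius action); the summand depends only on the coset Γ_∞h and the series converges absolutely. -/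

import Mathlib

open Matrix Complex Filter Topology

noncomputable section

abbrev M2C := Matrix (Fin 2) (Fin 2) ℂ
abbrev M2R := Matrix (Fin 2) (Fin 2) ℝ
abbrev M2Q := Matrix (Fin 2) (Fin 2) ℚ
abbrev M4R := Matrix (Fin 2 ⊕ Fin 2) (Fin 2 ⊕ Fin 2) ℝ

/-- The standard symplectic form of degree 2. -/
def J4 : M4R := Matrix.fromBlocks 0 1 (-1) 0

/-- `g` is a real symplectic matrix of degree 2. -/
def IsSymplectic (g : M4R) : Prop := gᵀ * J4 * g = J4

/-- all entries of `g` are integers -/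
def IsIntegral4 (g : M4R) : Prop := ∀ i j, ∃ n : ℤ, g i j = (n : ℝ)

/-- The Siegel modular group `Γ₂ = Sp₂(ℤ)` (as a set of real matrices). -/
def Sp2Z : Set M4R := {g | IsSymplectic g ∧ IsIntegral4 g}

/-- `Γ_{2,0}`: elements of `Γ₂` whose lower-left 2×2 block is `0`. -/
def Gamma20 : Set M4R := {g | g ∈ Sp2Z ∧ Matrix.toBlocks₂₁ g = 0}

/-- entrywise coercion of a real 4×4 matrix to a complex one -/
def mapC (g : M4R) : Matrix (Fin 2 ⊕ Fin 2) (Fin 2 ⊕ Fin 2) ℂ := g.map (fun x => (x : ℂ))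

/-- The action `g(Z) = (AZ+B)(CZ+D)⁻¹` of `Sp₂(ℝ)` on the Siegel upper half space. -/
def smul4 (g : M4R) (Z : M2C) : M2C :=
  ((mapC g).toBlocks₁₁ * Z + (mapC g).toBlocks₁₂) * ((mapC g).toBlocks₂₁ * Z + (mapC g).toBlocks₂₂)⁻¹

/-- The factor of automorphy `j(g,Z) = det (CZ + D)`. -/
def jfac (g : M4R) (Z : M2C) : ℂ := ((mapC g).toBlocks₂₁ * Z + (mapC g).toBlocks₂₂).det

/-- entrywise imaginary part -/
def ImM (Z : M2C) : M2R := Z.map Complex.im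

/-- The Siegel upper half space of degree 2. -/
def SiegelH2 : Set M2C := {Z | Z.IsSymm ∧ (ImM Z).PosDef}

/-- `δ(Z) := det (Im Z)` -/
def Hdelta (Z : M2C) : ℝ := (ImM Z).det

/-- The summand `j(g,Z)^{-k} δ(g(Z))^s` of the Siegel Eisenstein series. -/
def eisSummand (k : ℤ) (s : ℂ) (g : M4R) (Z : M2C) : ℂ :=
  jfac g Z ^ (-k) * ((Hdelta (smul4 g Z) : ℂ)) ^ s

/-- `Γ = SL₂(ℤ)` as a set of real 2×2 matrices. -/
def SL2Zset : Set M2R := {g | g.det = 1 ∧ ∀ i j, ∃ n : ℤ, g i j = (n : ℝ)}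

/-- `Γ_∞`: upper triangular elements of `SL₂(ℤ)`. -/
def GammaInf : Set M2R := {g | g ∈ SL2Zset ∧ g 1 0 = 0}

/-- The embedding `(A,B) ↦ A × B` of pairs of 2×2 matrices into 4×4 matrices. -/
def emb (A B : M2R) : M4R :=
  Matrix.fromBlocks !![A 0 0, 0; 0, B 0 0] !![A 0 1, 0; 0, B 0 1]
                    !![A 1 0, 0; 0, B 1 0] !![A 1 1, 0; 0, B 1 1]

/-- `g• := g × 1` -/
def embUp (A : M2R) : M4R := emb A 1

/-- `g_• := 1 × g` -/
def embLow (B : M2R) : M4R := emb 1 B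

/-- `χ_{k,s}(g,Z) = j(g,Z)^{-k} |j(g,Z)|^{-2s}` -/
def chiF (k : ℤ) (s : ℂ) (g : M4R) (Z : M2C) : ℂ :=
  jfac g Z ^ (-k) * ((‖jfac g Z‖ : ℂ)) ^ (-(2 * s))

/-- `φ(Z) = τ + 2z + τ'` -/
def phiF (Z : M2C) : ℂ := Z 0 0 + 2 * Z 0 1 + Z 1 1

/-- `Φ_{k,s}(Z) = φ(Z)^{-k} |φ(Z)|^{-2s}` -/
def PhiF (k : ℤ) (s : ℂ) (Z : M2C) : ℂ :=
  phiF Z ^ (-k) * ((‖phiF Z‖ : ℂ)) ^ (-(2 * s))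

/-- The Petersson slash operator `(F|_k g)(Z) = j(g,Z)^{-k} F(g(Z))`. -/
def slashOp (k : ℤ) (g : M4R) (F : M2C → ℂ) (Z : M2C) : ℂ := jfac g Z ^ (-k) * F (smul4 g Z)

/-- The Siegel modular group as a type. -/
def Sp2ZT := {g : M4R // g ∈ Sp2Z}

/-- the left coset relation for `Γ_{2,0} \ Γ₂` -/
def rel20 (g g' : Sp2ZT) : Prop := ∃ γ ∈ Gamma20, g'.1 = γ * g.1

/-- `SL₂(ℤ)` as a type. -/
def SL2ZT := {g : M2R // g ∈ SL2Zset}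

/-- the left coset relation for `Γ_∞ \ Γ` -/
def relInf (g g' : SL2ZT) : Prop := ∃ γ ∈ GammaInf, g'.1 = γ * g.1

/-- a choice of representative of an equivalence class -/
def qout {α : Sort*} {r : α → α → Prop} (q : Quot r) : α := Classical.choose (Quot.exists_rep q)

/-- The real analytic Siegel Eisenstein series of degree 2:
`E_k^{(2)}(Z,s) = Σ_{g ∈ Γ_{2,0}\Γ₂} j(g,Z)^{-k} δ(g(Z))^s`. -/
def Eis (k : ℤ) (s : ℂ) (Z : M2C) : ℂ := ∑' q : Quot rel20, eisSummand k s (qout q).1 Z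

/-- `B_k(Z,s) = δ(Z)^s Σ_{g ∈ Γ} Φ_{k,s}(g_•(Z)) χ_{k,s}(g_•,Z)` -/
def Bk (k : ℤ) (s : ℂ) (W : M2C) : ℂ :=
  ((Hdelta W : ℂ)) ^ s * ∑' g : SL2ZT, PhiF k s (smul4 (embLow g.1) W) * chiF k s (embLow g.1) W

/-- `A_k(Z,s) = δ(Z)^s Σ_{g,h ∈ Γ_∞\Γ} χ_{k,s}(g• h_•, Z)` -/
def Ak (k : ℤ) (s : ℂ) (Z : M2C) : ℂ :=
  ((Hdelta Z : ℂ)) ^ s *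
    ∑' q : Quot relInf × Quot relInf, chiF k s (embUp (qout q.1).1 * embLow (qout q.2).1) Z

/-- The normalized Hecke operator `T_p` applied via the upper embedding `•`. -/
def TpUp (k : ℤ) (p : ℕ) (F : M2C → ℂ) (Z : M2C) : ℂ :=
  (p : ℂ) ^ ((k : ℂ) / 2 - 1) *
    (slashOp k (embUp (((p : ℝ) ^ (-(1:ℝ)/2)) • !![(p:ℝ), 0; 0, 1])) F Z +
      ∑ a : Fin p, slashOp k (embUp (((p : ℝ) ^ (-(1:ℝ)/2)) • !![1, ((a:ℕ):ℝ); 0, (p:ℝ)])) F Z)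

/-- The normalized Hecke operator `T_p` applied via the lower embedding `_•`. -/
def TpLow (k : ℤ) (p : ℕ) (F : M2C → ℂ) (Z : M2C) : ℂ :=
  (p : ℂ) ^ ((k : ℂ) / 2 - 1) *
    (slashOp k (embLow (((p : ℝ) ^ (-(1:ℝ)/2)) • !![(p:ℝ), 0; 0, 1])) F Z +
      ∑ a : Fin p, slashOp k (embLow (((p : ℝ) ^ (-(1:ℝ)/2)) • !![1, ((a:ℕ):ℝ); 0, (p:ℝ)])) F Z)

/-- `SL₂(ℤ)` as a set of rational matrices. -/
def SL2Qint : Set M2Q := {g | g.det = 1 ∧ ∀ i j, ∃ n : ℤ, g i j = (n : ℚ)}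

/-- the left coset `Γ g` in `GL₂(ℚ)` -/
def leftCosetQ (g : M2Q) : Set M2Q := {x | ∃ γ ∈ SL2Qint, x = γ * g}

/-- the double coset `Γ g Γ` in `GL₂(ℚ)` -/
def doubleCosetQ (g : M2Q) : Set M2Q := {x | ∃ γ₁ ∈ SL2Qint, ∃ γ₂ ∈ SL2Qint, x = γ₁ * g * γ₂}

/-- `d_m = [[m,0],[0,m⁻¹]]` -/
def dmQ (m : ℕ) : M2Q := !![(m:ℚ), 0; 0, (m:ℚ)⁻¹]

/-- entrywise coercion `ℚ → ℝ` -/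
def mapR (g : M2Q) : M2R := g.map (fun x => (x : ℝ))

/-- `γ 0, …, γ (r-1)` is a system of representatives for the left cosets of `Γ`
contained in the double coset `Γ d_m Γ`. -/
def IsRepSystem (m : ℕ) (r : ℕ) (γ : Fin r → M2Q) : Prop :=
  (∀ j, γ j ∈ doubleCosetQ (dmQ m)) ∧
  (⋃ j, leftCosetQ (γ j)) = doubleCosetQ (dmQ m) ∧
  (∀ j j', j ≠ j' → Disjoint (leftCosetQ (γ j)) (leftCosetQ (γ j')))

/-- the matrices `g_m` -/
def gmMat (m : ℕ) : M4R :=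
  Matrix.fromBlocks !![0,0;0,1] !![-1,0;0,0] !![1,(m:ℝ);0,0] !![0,0;-(m:ℝ),1]

/-- `J_m = [[0,1/m],[m,0]]` -/
def JmMat (m : ℕ) : M2R := !![0, 1/(m:ℝ); (m:ℝ), 0]

/-- `Γ(m) = {g ∈ Γ : J_m g J_m ∈ Γ}` -/
def GammaM (m : ℕ) : Set M2R := {g | g ∈ SL2Zset ∧ JmMat m * g * JmMat m ∈ SL2Zset}

/-- the left coset `Γ_{2,0} x` -/
def C20 (x : M4R) : Set M4R := {y | ∃ γ ∈ Gamma20, y = γ * x}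

/-- `g^# = [[d,b],[c,a]]` -/
def sharp (g : M2R) : M2R := !![g 1 1, g 0 1; g 1 0, g 0 0]

/-- half-integral symmetric matrix `[[n, r/2],[r/2, m]]` -/
def halfIntMat (n r m : ℤ) : M2R := !![(n:ℝ), (r:ℝ)/2; (r:ℝ)/2, (m:ℝ)]

def IsHalfIntegral (M : M2R) : Prop := ∃ n r m : ℤ, M = halfIntMat n r m

/-- `Z = X + iY` -/
def mkZ (X Y : M2R) : M2C := X.map (fun x => (x:ℂ)) + Complex.I • Y.map (fun x => (x:ℂ))

/-- `j([[a,b],[c,d]], τ) = cτ + d` on the upper half plane -/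
def jSL (g : M2R) (τ : ℂ) : ℂ := (g 1 0 : ℝ) * τ + ((g 1 1 : ℝ) : ℂ)

/-- the Möbius action of `GL₂⁺(ℝ)` on the upper half plane -/
def moeb (g : M2R) (τ : ℂ) : ℂ := (((g 0 0 : ℝ) : ℂ) * τ + ((g 0 1 : ℝ) : ℂ)) / (((g 1 0 : ℝ) : ℂ) * τ + ((g 1 1 : ℝ) : ℂ))

/-- the degree 1 real analytic Eisenstein series `E_k(τ,s) = Σ_{g ∈ Γ_∞\Γ} j(g,τ)^{-k} Im(g(τ))^s` -/
def E1 (k : ℤ) (s : ℂ) (τ : ℂ) : ℂ :=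
  ∑' q : Quot relInf, jSL (qout q).1 τ ^ (-k) * ((((moeb (qout q).1 τ).im : ℝ) : ℂ)) ^ s


/-- the summand `j(h_•,Z)^{-k} (δ(h_•(Z))/Im((h_•(Z))*))^s E_k((h_•(Z))*, s)` -/
noncomputable def AkTerm (k : ℤ) (s : ℂ) (Z : M2C) (g : M2R) : ℂ :=
  jfac (embLow g) Z ^ (-k) *
    (((Hdelta (smul4 (embLow g) Z) / ((smul4 (embLow g) Z) 0 0).im : ℝ)) : ℂ) ^ s *
    E1 k s ((smul4 (embLow g) Z) 0 0)

-- ===== auxiliary development =====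

lemma toBlocks_mapC_embLow (g : M2R) :
    (mapC (embLow g)).toBlocks₁₁ = !![1, 0; 0, (g 0 0 : ℂ)] ∧
    (mapC (embLow g)).toBlocks₁₂ = !![0, 0; 0, (g 0 1 : ℂ)] ∧
    (mapC (embLow g)).toBlocks₂₁ = !![0, 0; 0, (g 1 0 : ℂ)] ∧
    (mapC (embLow g)).toBlocks₂₂ = !![1, 0; 0, (g 1 1 : ℂ)] := by
  refine ⟨?_, ?_, ?_, ?_⟩ <;>
    · ext i j
      fin_cases i <;> fin_cases j <;>
        simp [mapC, embLow, emb, Matrix.toBlocks₁₁, Matrix.toBlocks₁₂, Matrix.toBlocks₂₁,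
          Matrix.toBlocks₂₂, Matrix.one_apply]

lemma toBlocks_mapC_embUp (g : M2R) :
    (mapC (embUp g)).toBlocks₁₁ = !![(g 0 0 : ℂ), 0; 0, 1] ∧
    (mapC (embUp g)).toBlocks₁₂ = !![(g 0 1 : ℂ), 0; 0, 0] ∧
    (mapC (embUp g)).toBlocks₂₁ = !![(g 1 0 : ℂ), 0; 0, 0] ∧
    (mapC (embUp g)).toBlocks₂₂ = !![(g 1 1 : ℂ), 0; 0, 1] := by
  refine ⟨?_, ?_, ?_, ?_⟩ <;>
    · ext i j
      fin_cases i <;> fin_cases j <;>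
        simp [mapC, embUp, emb, Matrix.toBlocks₁₁, Matrix.toBlocks₁₂, Matrix.toBlocks₂₁,
          Matrix.toBlocks₂₂, Matrix.one_apply]

lemma jfac_embLow (g : M2R) (Z : M2C) : jfac (embLow g) Z = jSL g (Z 1 1) := by
  unfold jfac jSL
  rw [(toBlocks_mapC_embLow g).2.2.1, (toBlocks_mapC_embLow g).2.2.2, Matrix.det_fin_two]
  simp [Matrix.add_apply, Matrix.mul_apply, Matrix.vecMul, dotProduct, Fin.sum_univ_two,
    Matrix.vecHead, Matrix.vecTail]

lemma smul4_embLow (g : M2R) (Z : M2C) (hdet : g 0 0 * g 1 1 - g 0 1 * g 1 0 = 1)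
    (hsymm : Z 1 0 = Z 0 1) (hj : jSL g (Z 1 1) ≠ 0) :
    smul4 (embLow g) Z = !![Z 0 0 - (g 1 0 : ℂ) * Z 0 1 ^ 2 / jSL g (Z 1 1), Z 0 1 / jSL g (Z 1 1);
      Z 0 1 / jSL g (Z 1 1), ((g 0 0 : ℂ) * Z 1 1 + (g 0 1 : ℂ)) / jSL g (Z 1 1)] := by
  have hdetC : (g 0 0 : ℂ) * (g 1 1 : ℂ) - (g 0 1 : ℂ) * (g 1 0 : ℂ) = 1 := by
    exact_mod_cast congrArg (fun x : ℝ => (x : ℂ)) hdet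
  have hjC : (g 1 0 : ℂ) * Z 1 1 + (g 1 1 : ℂ) ≠ 0 := hj
  unfold smul4
  rw [(toBlocks_mapC_embLow g).1, (toBlocks_mapC_embLow g).2.1, (toBlocks_mapC_embLow g).2.2.1,
    (toBlocks_mapC_embLow g).2.2.2]
  have hN : (!![0, 0; 0, (g 1 0 : ℂ)] * Z + !![1, 0; 0, (g 1 1 : ℂ)])⁻¹
      = !![1, 0; -(g 1 0 : ℂ) * Z 1 0 / jSL g (Z 1 1), 1 / jSL g (Z 1 1)] := by
    apply Matrix.inv_eq_right_inv
    ext i j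
    fin_cases i <;> fin_cases j <;>
      simp only [Matrix.add_apply, Matrix.mul_apply, Fin.sum_univ_two, Matrix.one_apply, jSL] <;>
      norm_num <;> field_simp [jSL] at hjC ⊢ <;> ring
  rw [hN]
  ext i j
  fin_cases i <;> fin_cases j <;>
    simp only [Matrix.add_apply, Matrix.mul_apply, Fin.sum_univ_two, jSL] <;>
    norm_num [hsymm] <;> field_simp [jSL] at hjC ⊢ <;> first
      | linear_combination Z 0 1 * hdetC
      | linear_combination -Z 0 1 * hdetC
      | ring

lemma siegel_im11 {Z : M2C} (hZ : Z ∈ SiegelH2) : 0 < (Z 1 1).im := by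
  have h := hZ.2.diag_pos (i := 1)
  simpa [ImM] using h

lemma siegel_hdelta_pos {Z : M2C} (hZ : Z ∈ SiegelH2) : 0 < Hdelta Z := hZ.2.det_pos

lemma siegel_symm {Z : M2C} (hZ : Z ∈ SiegelH2) : Z 1 0 = Z 0 1 := hZ.1.apply 0 1

lemma jSL_ne_zero {g : M2R} (hdet : g 0 0 * g 1 1 - g 0 1 * g 1 0 = 1) {τ : ℂ}
    (hτ : 0 < τ.im) : jSL g τ ≠ 0 := by
  by_cases hc : g 1 0 = 0
  · have hd : g 1 1 ≠ 0 := by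
      intro h
      rw [hc, h] at hdet
      norm_num at hdet
    simp [jSL, hc, hd, Complex.ext_iff]
  · intro h
    have him := congrArg Complex.im h
    simp [jSL] at him
    rcases him with him | him
    · exact hc him
    · exact hτ.ne' him

lemma moeb_im (g : M2R) (hdet : g 0 0 * g 1 1 - g 0 1 * g 1 0 = 1) (τ : ℂ) :
    (moeb g τ).im = τ.im / Complex.normSq (jSL g τ) := by
  unfold moeb
  rw [Complex.div_im, ← sub_div]
  have : ((g 0 0 : ℂ) * τ + (g 0 1 : ℂ)).im * ((g 1 0 : ℂ) * τ + (g 1 1 : ℂ)).re -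
      ((g 0 0 : ℂ) * τ + (g 0 1 : ℂ)).re * ((g 1 0 : ℂ) * τ + (g 1 1 : ℂ)).im = τ.im := by
    simp only [Complex.add_im, Complex.add_re, Complex.mul_im, Complex.mul_re,
      Complex.ofReal_re, Complex.ofReal_im]
    linear_combination τ.im * hdet
  rw [this]
  rfl

lemma Hdelta_smul (g : M2R) (Z : M2C) (hdet : g 0 0 * g 1 1 - g 0 1 * g 1 0 = 1)
    (hsymm : Z 1 0 = Z 0 1) (hτ' : 0 < (Z 1 1).im) :
    Hdelta (smul4 (embLow g) Z) = Hdelta Z / Complex.normSq (jSL g (Z 1 1)) := by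
  have hj : jSL g (Z 1 1) ≠ 0 := jSL_ne_zero hdet hτ'
  have hN : Complex.normSq (jSL g (Z 1 1)) ≠ 0 := by simpa [Complex.normSq_eq_zero] using hj
  have h11 : (((g 0 0 : ℂ) * Z 1 1 + (g 0 1 : ℂ)) / jSL g (Z 1 1)).im
      = (Z 1 1).im / Complex.normSq (jSL g (Z 1 1)) := moeb_im g hdet (Z 1 1)
  have hre : (jSL g (Z 1 1)).re = g 1 0 * (Z 1 1).re + g 1 1 := by
    simp [jSL]
  have him : (jSL g (Z 1 1)).im = g 1 0 * (Z 1 1).im := by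
    simp [jSL]
  have hNs : Complex.normSq (jSL g (Z 1 1))
      = (g 1 0 * (Z 1 1).re + g 1 1) ^ 2 + (g 1 0 * (Z 1 1).im) ^ 2 := by
    rw [Complex.normSq_apply, hre, him]
    ring
  have hD : (g 1 0 * (Z 1 1).re + g 1 1) ^ 2 + (g 1 0 * (Z 1 1).im) ^ 2 ≠ 0 := hNs ▸ hN
  rw [smul4_embLow g Z hdet hsymm hj]
  unfold Hdelta ImM
  rw [Matrix.det_fin_two, Matrix.det_fin_two]
  simp only [Matrix.map_apply, Matrix.cons_val', Matrix.cons_val_zero, Matrix.cons_val_one,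
    Matrix.head_cons, Matrix.empty_val', Matrix.cons_val_fin_one, Matrix.head_fin_const,
    Matrix.of_apply]
  rw [h11, hsymm]
  simp only [Complex.div_im, Complex.sub_im, Complex.sub_re, Complex.mul_im, Complex.mul_re,
    Complex.add_re, Complex.add_im, Complex.ofReal_re, Complex.ofReal_im, pow_two,
    hre, him, hNs]
  have hInv : ((g 1 0 * (Z 1 1).re + g 1 1) ^ 2 + (g 1 0 * (Z 1 1).im) ^ 2)
      * ((g 1 0 * (Z 1 1).re + g 1 1) ^ 2 + (g 1 0 * (Z 1 1).im) ^ 2)⁻¹ = 1 :=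
    mul_inv_cancel₀ hD
  first
  | linear_combination (-(Z 0 1).im ^ 2 *
      ((g 1 0 * (Z 1 1).re + g 1 1) ^ 2 + (g 1 0 * (Z 1 1).im) ^ 2)⁻¹) * hInv
  | linear_combination ((Z 0 1).im ^ 2 *
      ((g 1 0 * (Z 1 1).re + g 1 1) ^ 2 + (g 1 0 * (Z 1 1).im) ^ 2)⁻¹) * hInv
  | ring

lemma W_e00 (g : M2R) (Z : M2C) (hdet : g 0 0 * g 1 1 - g 0 1 * g 1 0 = 1)
    (hsymm : Z 1 0 = Z 0 1) (hj : jSL g (Z 1 1) ≠ 0) :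
    (smul4 (embLow g) Z) 0 0 = Z 0 0 - (g 1 0 : ℂ) * Z 0 1 ^ 2 / jSL g (Z 1 1) := by
  rw [smul4_embLow g Z hdet hsymm hj]; norm_num

lemma W_e01 (g : M2R) (Z : M2C) (hdet : g 0 0 * g 1 1 - g 0 1 * g 1 0 = 1)
    (hsymm : Z 1 0 = Z 0 1) (hj : jSL g (Z 1 1) ≠ 0) :
    (smul4 (embLow g) Z) 0 1 = Z 0 1 / jSL g (Z 1 1) := by
  rw [smul4_embLow g Z hdet hsymm hj]; norm_num

lemma W_e10 (g : M2R) (Z : M2C) (hdet : g 0 0 * g 1 1 - g 0 1 * g 1 0 = 1)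
    (hsymm : Z 1 0 = Z 0 1) (hj : jSL g (Z 1 1) ≠ 0) :
    (smul4 (embLow g) Z) 1 0 = Z 0 1 / jSL g (Z 1 1) := by
  rw [smul4_embLow g Z hdet hsymm hj]; norm_num

lemma W_e11 (g : M2R) (Z : M2C) (hdet : g 0 0 * g 1 1 - g 0 1 * g 1 0 = 1)
    (hsymm : Z 1 0 = Z 0 1) (hj : jSL g (Z 1 1) ≠ 0) :
    (smul4 (embLow g) Z) 1 1 = ((g 0 0 : ℂ) * Z 1 1 + (g 0 1 : ℂ)) / jSL g (Z 1 1) := by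
  rw [smul4_embLow g Z hdet hsymm hj]; norm_num

lemma Hdelta_expand (W : M2C) :
    Hdelta W = (W 0 0).im * (W 1 1).im - (W 0 1).im * (W 1 0).im := by
  unfold Hdelta ImM
  rw [Matrix.det_fin_two]
  simp [Matrix.map_apply]

lemma imW00_ge (g : M2R) (Z : M2C) (hdet : g 0 0 * g 1 1 - g 0 1 * g 1 0 = 1)
    (hZ : Z ∈ SiegelH2) :
    Hdelta Z / (Z 1 1).im ≤ ((smul4 (embLow g) Z) 0 0).im := by
  have hy' := siegel_im11 hZ
  have hδ := siegel_hdelta_pos hZ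
  have hsymm := siegel_symm hZ
  have hj : jSL g (Z 1 1) ≠ 0 := jSL_ne_zero hdet hy'
  have hN : 0 < Complex.normSq (jSL g (Z 1 1)) := Complex.normSq_pos.mpr hj
  have hHd := Hdelta_smul g Z hdet hsymm hy'
  have h11im : ((smul4 (embLow g) Z) 1 1).im = (Z 1 1).im / Complex.normSq (jSL g (Z 1 1)) := by
    rw [W_e11 g Z hdet hsymm hj]
    exact moeb_im g hdet (Z 1 1)
  rw [Hdelta_expand, W_e01 g Z hdet hsymm hj, W_e10 g Z hdet hsymm hj, h11im] at hHd
  set w := ((smul4 (embLow g) Z) 0 0).im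
  set q := (Z 0 1 / jSL g (Z 1 1)).im
  set N := Complex.normSq (jSL g (Z 1 1))
  have key2 : w * (Z 1 1).im = Hdelta Z + q * q * N := by
    field_simp at hHd
    nlinarith [hHd]
  rw [div_le_iff₀ hy']
  nlinarith [mul_nonneg (mul_self_nonneg q) hN.le]

lemma imW00_pos (g : M2R) (Z : M2C) (hdet : g 0 0 * g 1 1 - g 0 1 * g 1 0 = 1)
    (hZ : Z ∈ SiegelH2) : 0 < ((smul4 (embLow g) Z) 0 0).im :=
  lt_of_lt_of_le (div_pos (siegel_hdelta_pos hZ) (siegel_im11 hZ)) (imW00_ge g Z hdet hZ)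

lemma SL2_det_entries {g : M2R} (hg : g ∈ SL2Zset) :
    g 0 0 * g 1 1 - g 0 1 * g 1 0 = 1 := by
  have := hg.1
  rwa [Matrix.det_fin_two] at this

lemma mapC_mul (M N : M4R) : mapC (M * N) = mapC M * mapC N := by
  unfold mapC
  exact Matrix.map_mul (f := Complex.ofRealHom)

lemma jfac_mul (g h : M2R) (Z : M2C) (hdet : h 0 0 * h 1 1 - h 0 1 * h 1 0 = 1)
    (hsymm : Z 1 0 = Z 0 1) (hj : jSL h (Z 1 1) ≠ 0) :
    jfac (embUp g * embLow h) Z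
      = jSL g ((smul4 (embLow h) Z) 0 0) * jSL h (Z 1 1) := by
  unfold jfac
  rw [mapC_mul, ← Matrix.fromBlocks_toBlocks (mapC (embUp g)),
    ← Matrix.fromBlocks_toBlocks (mapC (embLow h)),
    (toBlocks_mapC_embUp g).1, (toBlocks_mapC_embUp g).2.1, (toBlocks_mapC_embUp g).2.2.1,
    (toBlocks_mapC_embUp g).2.2.2,
    (toBlocks_mapC_embLow h).1, (toBlocks_mapC_embLow h).2.1, (toBlocks_mapC_embLow h).2.2.1,
    (toBlocks_mapC_embLow h).2.2.2, Matrix.fromBlocks_multiply,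
    Matrix.toBlocks_fromBlocks₂₁, Matrix.toBlocks_fromBlocks₂₂]
  rw [W_e00 h Z hdet hsymm hj, Matrix.det_fin_two]
  unfold jSL at hj ⊢
  simp only [Matrix.add_apply, Matrix.mul_apply, Fin.sum_univ_two, Matrix.cons_val',
    Matrix.cons_val_zero, Matrix.cons_val_one, Matrix.head_cons, Matrix.empty_val',
    Matrix.cons_val_fin_one, Matrix.head_fin_const, Matrix.of_apply]
  norm_num [hsymm]
  field_simp
  ring

lemma absW00_le (g : M2R) (Z : M2C) (hdet : g 0 0 * g 1 1 - g 0 1 * g 1 0 = 1)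
    (hZ : Z ∈ SiegelH2) :
    ‖(smul4 (embLow g) Z) 0 0‖
      ≤ ‖Z 0 0‖ + Complex.normSq (Z 0 1) / (Z 1 1).im := by
  have hy' := siegel_im11 hZ
  have hsymm := siegel_symm hZ
  have hj : jSL g (Z 1 1) ≠ 0 := jSL_ne_zero hdet hy'
  rw [W_e00 g Z hdet hsymm hj]
  refine (norm_sub_le _ _).trans ?_
  gcongr
  by_cases hc : g 1 0 = 0
  · simp [hc]
    exact div_nonneg (Complex.normSq_nonneg _) hy'.le
  · have him : (jSL g (Z 1 1)).im = g 1 0 * (Z 1 1).im := by simp [jSL]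
    have habsj : |g 1 0| * (Z 1 1).im ≤ ‖jSL g (Z 1 1)‖ := by
      calc |g 1 0| * (Z 1 1).im = |(jSL g (Z 1 1)).im| := by
            rw [him, abs_mul, abs_of_pos hy']
        _ ≤ ‖jSL g (Z 1 1)‖ := Complex.abs_im_le_norm _
    rw [norm_div, norm_mul, Complex.norm_real, Real.norm_eq_abs]
    rw [div_le_div_iff₀ (norm_pos_iff.mpr hj) hy']
    calc |g 1 0| * ‖Z 0 1 ^ 2‖ * (Z 1 1).im
        = Complex.normSq (Z 0 1) * (|g 1 0| * (Z 1 1).im) := by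
          rw [← Complex.sq_norm, norm_pow]; ring
      _ ≤ Complex.normSq (Z 0 1) * ‖jSL g (Z 1 1)‖ := by
          gcongr
          exact Complex.normSq_nonneg _

def rowZ (g : M2R) : Fin 2 → ℤ := ![⌊g 1 0⌋, ⌊g 1 1⌋]

lemma rowZ0 {g : M2R} (hg : g ∈ SL2Zset) : ((rowZ g 0 : ℤ) : ℝ) = g 1 0 := by
  obtain ⟨n, hn⟩ := hg.2 1 0
  simp [rowZ, hn]

lemma rowZ1 {g : M2R} (hg : g ∈ SL2Zset) : ((rowZ g 1 : ℤ) : ℝ) = g 1 1 := by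
  obtain ⟨n, hn⟩ := hg.2 1 1
  simp [rowZ, hn]

lemma rowZ_ne_zero {g : M2R} (hg : g ∈ SL2Zset) : rowZ g ≠ 0 := by
  intro h
  have h0 : g 1 0 = 0 := by
    rw [← rowZ0 hg, h]; simp
  have h1 : g 1 1 = 0 := by
    rw [← rowZ1 hg, h]; simp
  have := SL2_det_entries hg
  rw [h0, h1] at this
  norm_num at this

lemma qout_mk {α : Sort*} {r : α → α → Prop} (q : Quot r) : Quot.mk r (qout q) = q :=
  Classical.choose_spec (Quot.exists_rep q)

lemma SL2_mul {g h : M2R} (hg : g ∈ SL2Zset) (hh : h ∈ SL2Zset) : g * h ∈ SL2Zset := by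
  constructor
  · rw [Matrix.det_mul, hg.1, hh.1, one_mul]
  · intro i j
    obtain ⟨a, ha⟩ := hg.2 i 0
    obtain ⟨b, hb⟩ := hg.2 i 1
    obtain ⟨c, hc⟩ := hh.2 0 j
    obtain ⟨d, hd⟩ := hh.2 1 j
    refine ⟨a * c + b * d, ?_⟩
    simp only [Matrix.mul_apply, Fin.sum_univ_two, ha, hb, hc, hd]
    push_cast
    ring

lemma adj2_mem {g : M2R} (hg : g ∈ SL2Zset) :
    !![g 1 1, -(g 0 1); -(g 1 0), g 0 0] ∈ SL2Zset := by
  constructor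
  · rw [Matrix.det_fin_two]
    have := SL2_det_entries hg
    norm_num
    linarith
  · intro i j
    fin_cases i <;> fin_cases j <;>
      [ (obtain ⟨n, hn⟩ := hg.2 1 1);
        (obtain ⟨n, hn⟩ := hg.2 0 1);
        (obtain ⟨n, hn⟩ := hg.2 1 0);
        (obtain ⟨n, hn⟩ := hg.2 0 0)]
    · exact ⟨n, by simpa using hn⟩
    · exact ⟨-n, by simp [hn]⟩
    · exact ⟨-n, by simp [hn]⟩
    · exact ⟨n, by simpa using hn⟩

lemma adj2_mul {g : M2R} (hg : g ∈ SL2Zset) :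
    !![g 1 1, -(g 0 1); -(g 1 0), g 0 0] * g = 1 := by
  have h := SL2_det_entries hg
  ext i j
  fin_cases i <;> fin_cases j <;>
    simp [Matrix.mul_apply, Fin.sum_univ_two, Matrix.one_apply] <;> linarith

lemma coset_of_row_eq {g g' : M2R} (hg : g ∈ SL2Zset) (hg' : g' ∈ SL2Zset)
    (h0 : g 1 0 = g' 1 0) (h1 : g 1 1 = g' 1 1) : ∃ γ ∈ GammaInf, g' = γ * g := by
  refine ⟨g' * !![g 1 1, -(g 0 1); -(g 1 0), g 0 0], ⟨SL2_mul hg' (adj2_mem hg), ?_⟩, ?_⟩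
  · simp [Matrix.mul_apply, Fin.sum_univ_two, ← h0, ← h1]
    ring
  · rw [Matrix.mul_assoc, adj2_mul hg, Matrix.mul_one]

lemma rowZ_inj : Function.Injective
    (fun q : Quot relInf => rowZ (qout q).1) := by
  intro q q' h
  simp only at h
  have h0 : (qout q).1 1 0 = (qout q').1 1 0 := by
    rw [← rowZ0 (qout q).2, ← rowZ0 (qout q').2, h]
  have h1 : (qout q).1 1 1 = (qout q').1 1 1 := by
    rw [← rowZ1 (qout q).2, ← rowZ1 (qout q').2, h]
  rw [← qout_mk q, ← qout_mk q']
  exact Quot.sound (coset_of_row_eq (qout q).2 (qout q').2 h0 h1)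

lemma gammaInf_eps {γ : M2R} (hγ : γ ∈ GammaInf) :
    (γ 1 1 = 1 ∨ γ 1 1 = -1) ∧ γ 0 0 = γ 1 1 := by
  have h10 := hγ.2
  have hdet := SL2_det_entries hγ.1
  rw [h10] at hdet
  obtain ⟨m, hm⟩ := hγ.1.2 0 0
  obtain ⟨n, hn⟩ := hγ.1.2 1 1
  rw [hm, hn] at hdet ⊢
  have hmn : m * n = 1 := by exact_mod_cast (by linarith : (m : ℝ) * n = 1)
  rcases Int.mul_eq_one_iff_eq_one_or_neg_one.mp hmn with ⟨h1, h2⟩ | ⟨h1, h2⟩ <;>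
    rw [h1, h2] <;> norm_num

lemma eps_zpow_even {ε : ℝ} (hε : ε = 1 ∨ ε = -1) {k : ℤ} (hk : Even k) :
    (ε : ℂ) ^ (-k) = 1 := by
  rcases hε with h | h <;> rw [h]
  · simp
  · push_cast
    exact (hk.neg).neg_one_zpow

lemma AkTerm_eq_of_rel (k : ℤ) (hk : Even k) (s : ℂ) {Z : M2C} (hZ : Z ∈ SiegelH2)
    {h h' : SL2ZT} (hrel : relInf h h') : AkTerm k s Z h.1 = AkTerm k s Z h'.1 := by
  obtain ⟨γ, hγ, heq⟩ := hrel
  have hy' := siegel_im11 hZ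
  have hsymm := siegel_symm hZ
  have hdet := SL2_det_entries h.2
  have hh' : h'.1 ∈ SL2Zset := by rw [heq]; exact SL2_mul hγ.1 h.2
  have hdet' := SL2_det_entries hh'
  have hj : jSL h.1 (Z 1 1) ≠ 0 := jSL_ne_zero hdet hy'
  have hj' : jSL h'.1 (Z 1 1) ≠ 0 := jSL_ne_zero hdet' hy'
  obtain ⟨hε, -⟩ := gammaInf_eps hγ
  set ε := γ 1 1 with hεdef
  have hεR : ε ^ 2 = 1 := by rcases hε with h | h <;> rw [h] <;> norm_num
  have hεne : (ε : ℂ) ≠ 0 := by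
    rcases hε with h | h <;> rw [h] <;> norm_num
  have hrow0 : h'.1 1 0 = ε * h.1 1 0 := by
    rw [heq]
    simp [Matrix.mul_apply, Fin.sum_univ_two, hγ.2, hεdef]
  have hrow1 : h'.1 1 1 = ε * h.1 1 1 := by
    rw [heq]
    simp [Matrix.mul_apply, Fin.sum_univ_two, hγ.2, hεdef]
  have hjmul : jSL h'.1 (Z 1 1) = (ε : ℂ) * jSL h.1 (Z 1 1) := by
    unfold jSL
    rw [hrow0, hrow1]
    push_cast
    ring
  have hW00 : (smul4 (embLow h'.1) Z) 0 0 = (smul4 (embLow h.1) Z) 0 0 := by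
    rw [W_e00 h'.1 Z hdet' hsymm hj', W_e00 h.1 Z hdet hsymm hj, hrow0, hjmul]
    congr 1
    push_cast
    rw [mul_assoc, mul_div_mul_left _ _ hεne]
  have hHd : Hdelta (smul4 (embLow h'.1) Z) = Hdelta (smul4 (embLow h.1) Z) := by
    rw [Hdelta_smul h'.1 Z hdet' hsymm hy', Hdelta_smul h.1 Z hdet hsymm hy', hjmul]
    rw [Complex.normSq_mul, Complex.normSq_ofReal]
    rw [show ε * ε = 1 by nlinarith [hεR], one_mul]
  have hjf : jfac (embLow h'.1) Z ^ (-k) = jfac (embLow h.1) Z ^ (-k) := by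
    rw [jfac_embLow, jfac_embLow, hjmul, mul_zpow, eps_zpow_even hε hk, one_mul]
  unfold AkTerm
  rw [hW00, hHd, hjf]

lemma cpow_exp (r : ℝ) (hr : 0 < r) (w : ℂ) :
    (r : ℂ) ^ w = Complex.exp ((Real.log r : ℂ) * w) := by
  rw [Complex.cpow_def_of_ne_zero (Complex.ofReal_ne_zero.mpr hr.ne') w, Complex.ofReal_log hr.le]

lemma key_cpow {a b y δ : ℝ} (ha : 0 < a) (hb : 0 < b) (hy : 0 < y) (hδ : 0 < δ) (s : ℂ) :
    ((a * b : ℝ) : ℂ) ^ (-(2 * s)) * ((δ : ℝ) : ℂ) ^ s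
      = ((δ / (b ^ 2 * y) : ℝ) : ℂ) ^ s * ((y / a ^ 2 : ℝ) : ℂ) ^ s := by
  have h1 : (0:ℝ) < a * b := by positivity
  have h2 : (0:ℝ) < δ / (b ^ 2 * y) := by positivity
  have h3 : (0:ℝ) < y / a ^ 2 := by positivity
  rw [cpow_exp _ h1, cpow_exp _ hδ, cpow_exp _ h2, cpow_exp _ h3, ← Complex.exp_add,
    ← Complex.exp_add]
  congr 1
  rw [Real.log_div hδ.ne' (by positivity), Real.log_mul (by positivity) hy.ne',
    Real.log_div hy.ne' (by positivity), Real.log_mul ha.ne' hb.ne', Real.log_pow, Real.log_pow]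
  push_cast
  ring

lemma term_eq (k : ℤ) (s : ℂ) {Z : M2C} (hZ : Z ∈ SiegelH2) {g h : M2R}
    (hg : g ∈ SL2Zset) (hh : h ∈ SL2Zset) :
    ((Hdelta Z : ℝ) : ℂ) ^ s * chiF k s (embUp g * embLow h) Z
      = jfac (embLow h) Z ^ (-k) *
          (((Hdelta (smul4 (embLow h) Z) / ((smul4 (embLow h) Z) 0 0).im : ℝ)) : ℂ) ^ s *
        (jSL g ((smul4 (embLow h) Z) 0 0) ^ (-k) *
          (((moeb g ((smul4 (embLow h) Z) 0 0)).im : ℝ) : ℂ) ^ s) := by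
  have hy' := siegel_im11 hZ
  have hδ := siegel_hdelta_pos hZ
  have hsymm := siegel_symm hZ
  have hdeth := SL2_det_entries hh
  have hdetg := SL2_det_entries hg
  have hj2 : jSL h (Z 1 1) ≠ 0 := jSL_ne_zero hdeth hy'
  have hy : 0 < ((smul4 (embLow h) Z) 0 0).im := imW00_pos h Z hdeth hZ
  have hj1 : jSL g ((smul4 (embLow h) Z) 0 0) ≠ 0 := jSL_ne_zero hdetg hy
  have ha : 0 < ‖jSL g ((smul4 (embLow h) Z) 0 0)‖ := norm_pos_iff.mpr hj1
  have hb : 0 < ‖jSL h (Z 1 1)‖ := norm_pos_iff.mpr hj2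
  have hmid : Hdelta (smul4 (embLow h) Z) / ((smul4 (embLow h) Z) 0 0).im
      = Hdelta Z / (‖jSL h (Z 1 1)‖ ^ 2 * ((smul4 (embLow h) Z) 0 0).im) := by
    rw [Hdelta_smul h Z hdeth hsymm hy', Complex.normSq_eq_norm_sq, div_div]
  have hmoeb : (moeb g ((smul4 (embLow h) Z) 0 0)).im
      = ((smul4 (embLow h) Z) 0 0).im / ‖jSL g ((smul4 (embLow h) Z) 0 0)‖ ^ 2 := by
    rw [moeb_im g hdetg, Complex.normSq_eq_norm_sq]
  unfold chiF
  rw [jfac_mul g h Z hdeth hsymm hj2, jfac_embLow, hmid, hmoeb,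
    norm_mul, mul_zpow]
  have hkey := key_cpow ha hb hy hδ s
  set A := jSL g ((smul4 (embLow h) Z) 0 0) ^ (-k)
  set B := jSL h (Z 1 1) ^ (-k)
  linear_combination (A * B) * hkey

lemma norm_chi_aux (k : ℤ) (s : ℂ) {w : ℂ} (hw : w ≠ 0) :
    ‖w ^ (-k) * ((‖w‖ : ℝ) : ℂ) ^ (-(2 * s))‖
      = ‖w‖ ^ (-((k : ℝ) + 2 * s.re)) := by
  have hpos : 0 < ‖w‖ := norm_pos_iff.mpr hw
  rw [norm_mul, norm_zpow,
    Complex.norm_cpow_eq_rpow_re_of_pos hpos, ← Real.rpow_intCast (‖w‖) (-k),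
    ← Real.rpow_add hpos]
  congr 1
  simp [Complex.neg_re, Complex.mul_re]
  ring

lemma jSL_eq_rowZ {g : M2R} (hg : g ∈ SL2Zset) (τ : ℂ) :
    jSL g τ = ((rowZ g 0 : ℤ) : ℂ) * τ + ((rowZ g 1 : ℤ) : ℂ) := by
  unfold jSL
  rw [show ((rowZ g 0 : ℤ) : ℂ) = (((rowZ g 0 : ℤ) : ℝ) : ℂ) by push_cast; ring,
    show ((rowZ g 1 : ℤ) : ℂ) = (((rowZ g 1 : ℤ) : ℝ) : ℂ) by push_cast; ring,
    rowZ0 hg, rowZ1 hg]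

lemma chi_summable (k : ℤ) (s : ℂ) (hs : 2 * s.re + (k : ℝ) > 3) {Z : M2C}
    (hZ : Z ∈ SiegelH2) :
    Summable (fun p : Quot relInf × Quot relInf =>
      ‖chiF k s (embUp (qout p.1).1 * embLow (qout p.2).1) Z‖) := by
  have hy' := siegel_im11 hZ
  have hδ := siegel_hdelta_pos hZ
  have hsymm := siegel_symm hZ
  set α : ℝ := (k : ℝ) + 2 * s.re with hα
  have hα3 : 3 < α := by rw [hα]; linarith
  have hα0 : 0 < α := by linarith
  -- reference points in ℍ
  set y₀ : ℝ := Hdelta Z / (Z 1 1).im with hy₀def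
  have hy₀ : 0 < y₀ := div_pos hδ hy'
  set M : ℝ := ‖Z 0 0‖ + Complex.normSq (Z 0 1) / (Z 1 1).im with hMdef
  set zM : UpperHalfPlane := ⟨⟨M, y₀⟩, hy₀⟩ with hzM
  set zτ : UpperHalfPlane := ⟨Z 1 1, hy'⟩ with hzτ
  set C : ℝ := EisensteinSeries.r zM ^ (-α) * EisensteinSeries.r zτ ^ (-α) with hC
  have hrM : 0 < EisensteinSeries.r zM := EisensteinSeries.r_pos zM
  have hrτ : 0 < EisensteinSeries.r zτ := EisensteinSeries.r_pos zτ
  -- majorant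
  have hu : Summable (fun v : Fin 2 → ℤ => ‖v‖ ^ (-α)) :=
    EisensteinSeries.summable_one_div_norm_rpow (by linarith)
  have hmaj : Summable (fun w : (Fin 2 → ℤ) × (Fin 2 → ℤ) => ‖w.1‖ ^ (-α) * ‖w.2‖ ^ (-α)) :=
    hu.mul_of_nonneg hu (fun v => Real.rpow_nonneg (norm_nonneg _) _)
      (fun v => Real.rpow_nonneg (norm_nonneg _) _)
  have hinj : Function.Injective (fun p : Quot relInf × Quot relInf =>
      (rowZ (qout p.1).1, rowZ (qout p.2).1)) := by
    intro p p' hpp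
    have h1 := congrArg Prod.fst hpp
    have h2 := congrArg Prod.snd hpp
    simp only at h1 h2
    exact Prod.ext (rowZ_inj h1) (rowZ_inj h2)
  have hcomp := (hmaj.comp_injective hinj).mul_left C
  refine hcomp.of_nonneg_of_le (fun p => norm_nonneg _) (fun p => ?_)
  -- the pointwise bound
  set g : M2R := (qout p.1).1 with hgdef
  set h : M2R := (qout p.2).1 with hhdef
  have hg : g ∈ SL2Zset := (qout p.1).2
  have hh : h ∈ SL2Zset := (qout p.2).2
  have hdetg := SL2_det_entries hg
  have hdeth := SL2_det_entries hh
  have hj2 : jSL h (Z 1 1) ≠ 0 := jSL_ne_zero hdeth hy'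
  have hyW : 0 < ((smul4 (embLow h) Z) 0 0).im := imW00_pos h Z hdeth hZ
  have hj1 : jSL g ((smul4 (embLow h) Z) 0 0) ≠ 0 := jSL_ne_zero hdetg hyW
  set W00 : ℂ := (smul4 (embLow h) Z) 0 0 with hW00
  set zW : UpperHalfPlane := ⟨W00, hyW⟩ with hzW
  have hstrip : zW ∈ UpperHalfPlane.verticalStrip M y₀ := by
    constructor
    · exact le_trans (Complex.abs_re_le_norm W00) (absW00_le h Z hdeth hZ)
    · exact imW00_ge h Z hdeth hZ
  have hrW : EisensteinSeries.r zM ≤ EisensteinSeries.r zW :=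
    EisensteinSeries.r_lower_bound_on_verticalStrip zW hy₀ hstrip
  -- lower bounds on the two j factors
  have hb1 : EisensteinSeries.r zM * ‖rowZ g‖ ≤ ‖jSL g W00‖ := by
    have := EisensteinSeries.r_mul_max_le zW (rowZ_ne_zero hg)
    rw [jSL_eq_rowZ hg W00]
    calc EisensteinSeries.r zM * ‖rowZ g‖
        ≤ EisensteinSeries.r zW * ‖rowZ g‖ := by
          gcongr
      _ ≤ _ := this
  have hb2 : EisensteinSeries.r zτ * ‖rowZ h‖ ≤ ‖jSL h (Z 1 1)‖ := by
    have := EisensteinSeries.r_mul_max_le zτ (rowZ_ne_zero hh)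
    rw [jSL_eq_rowZ hh (Z 1 1)]
    exact this
  -- compute the norm
  have hval : ‖chiF k s (embUp g * embLow h) Z‖
      = (‖jSL g W00‖ * ‖jSL h (Z 1 1)‖) ^ (-α) := by
    unfold chiF
    have hne : jfac (embUp g * embLow h) Z ≠ 0 := by
      rw [jfac_mul g h Z hdeth hsymm hj2]
      exact mul_ne_zero hj1 hj2
    rw [norm_chi_aux k s hne, jfac_mul g h Z hdeth hsymm hj2, norm_mul]
  rw [hval]
  have hxpos : (0:ℝ) < ‖rowZ g‖ := norm_pos_iff.mpr (rowZ_ne_zero hg)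
  have hypos : (0:ℝ) < ‖rowZ h‖ := norm_pos_iff.mpr (rowZ_ne_zero hh)
  calc (‖jSL g W00‖ * ‖jSL h (Z 1 1)‖) ^ (-α)
      ≤ ((EisensteinSeries.r zM * ‖rowZ g‖) * (EisensteinSeries.r zτ * ‖rowZ h‖)) ^ (-α) := by
        apply Real.rpow_le_rpow_of_nonpos (by positivity) (by
          exact mul_le_mul hb1 hb2 (by positivity) (norm_nonneg _)) (by linarith)
    _ = C * (‖rowZ g‖ ^ (-α) * ‖rowZ h‖ ^ (-α)) := by
        rw [hC]
        rw [show (EisensteinSeries.r zM * ‖rowZ g‖) * (EisensteinSeries.r zτ * ‖rowZ h‖)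
          = (EisensteinSeries.r zM * EisensteinSeries.r zτ) * (‖rowZ g‖ * ‖rowZ h‖) by ring]
        rw [Real.mul_rpow (by positivity) (by positivity)]
        try rw [Real.mul_rpow (by positivity) (by positivity)]
        try rw [Real.mul_rpow (by positivity) (by positivity)]
        try ring

/-- `A_k(Z,s)` as a sum of degree 1 real analytic Eisenstein series. -/
theorem Ak_as_sum_of_E1 (k : ℤ) (hk : Even k) (s : ℂ) (hs : 2 * s.re + (k : ℝ) > 3)
    (Z : M2C) (hZ : Z ∈ SiegelH2) :
    (∀ h : SL2ZT, 0 < ((smul4 (embLow h.1) Z) 0 0).im) ∧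
    (∀ h h' : SL2ZT, relInf h h' → AkTerm k s Z h.1 = AkTerm k s Z h'.1) ∧
    Summable (fun q : Quot relInf => ‖AkTerm k s Z (qout q).1‖) ∧
    Ak k s Z = ∑' q : Quot relInf, AkTerm k s Z (qout q).1 := by
  have hy' := siegel_im11 hZ
  have hδ := siegel_hdelta_pos hZ
  have hsymm := siegel_symm hZ
  have part1 : ∀ h : SL2ZT, 0 < ((smul4 (embLow h.1) Z) 0 0).im :=
    fun h => imW00_pos h.1 Z (SL2_det_entries h.2) hZ
  have part2 : ∀ h h' : SL2ZT, relInf h h' → AkTerm k s Z h.1 = AkTerm k s Z h'.1 :=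
    fun h h' hr => AkTerm_eq_of_rel k hk s hZ hr
  set F : Quot relInf × Quot relInf → ℂ :=
    fun p => chiF k s (embUp (qout p.1).1 * embLow (qout p.2).1) Z with hFdef
  have hFs : Summable (fun p : Quot relInf × Quot relInf => ‖F p‖) := chi_summable k s hs hZ
  have hF : Summable F := hFs.of_norm
  have hinner : ∀ q2 : Quot relInf,
      ((Hdelta Z : ℝ) : ℂ) ^ s * ∑' q1 : Quot relInf, F (q1, q2)
        = AkTerm k s Z (qout q2).1 := by
    intro q2
    rw [← tsum_mul_left]
    calc ∑' q1 : Quot relInf, ((Hdelta Z : ℝ) : ℂ) ^ s * F (q1, q2)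
        = ∑' q1 : Quot relInf,
            (jfac (embLow (qout q2).1) Z ^ (-k) *
              (((Hdelta (smul4 (embLow (qout q2).1) Z)
                / ((smul4 (embLow (qout q2).1) Z) 0 0).im : ℝ)) : ℂ) ^ s) *
            (jSL (qout q1).1 ((smul4 (embLow (qout q2).1) Z) 0 0) ^ (-k) *
              (((moeb (qout q1).1 ((smul4 (embLow (qout q2).1) Z) 0 0)).im : ℝ) : ℂ) ^ s) := by
          refine tsum_congr fun q1 => ?_
          rw [show F (q1, q2) = chiF k s (embUp (qout q1).1 * embLow (qout q2).1) Z from rfl,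
            term_eq k s hZ (qout q1).2 (qout q2).2]
      _ = AkTerm k s Z (qout q2).1 := by
          rw [tsum_mul_left]
          unfold AkTerm E1
          rw [mul_assoc]
  have hswap : Summable (fun p : Quot relInf × Quot relInf => ‖F (p.2, p.1)‖) :=
    (Equiv.prodComm (Quot relInf) (Quot relInf)).summable_iff.mpr hFs
  obtain ⟨hslice, houter⟩ := (summable_prod_of_nonneg (fun _ => norm_nonneg _)).mp hswap
  have part3 : Summable (fun q : Quot relInf => ‖AkTerm k s Z (qout q).1‖) := by
    refine (houter.mul_left ‖((Hdelta Z : ℝ) : ℂ) ^ s‖).of_nonneg_of_le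
      (fun q => norm_nonneg _) (fun q2 => ?_)
    rw [← hinner q2, norm_mul]
    exact mul_le_mul_of_nonneg_left (norm_tsum_le_tsum_norm (hslice q2)) (norm_nonneg _)
  refine ⟨part1, part2, part3, ?_⟩
  have hF' : Summable (Function.uncurry fun a b => F (a, b)) := by
    exact hF
  calc Ak k s Z = ((Hdelta Z : ℝ) : ℂ) ^ s * ∑' p : Quot relInf × Quot relInf, F p := rfl
    _ = ((Hdelta Z : ℝ) : ℂ) ^ s *
          ∑' (q1 : Quot relInf) (q2 : Quot relInf), F (q1, q2) := by rw [hF.tsum_prod]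
    _ = ((Hdelta Z : ℝ) : ℂ) ^ s *
          ∑' (q2 : Quot relInf) (q1 : Quot relInf), F (q1, q2) := by rw [hF'.tsum_comm]
    _ = ∑' q2 : Quot relInf, ((Hdelta Z : ℝ) : ℂ) ^ s * ∑' q1 : Quot relInf, F (q1, q2) := by
          rw [tsum_mul_left]
    _ = ∑' q2 : Quot relInf, AkTerm k s Z (qout q2).1 := tsum_congr hinner

end
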